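/- In the abstract relative-energy setting with the distance-weighted length constraint on ξ, one has ∫_Ω ‖n − ξ‖² · √(2w)‖a‖ dμ + ∫_Ω min{δ², 1} · √(2w)‖a‖ dμ ≤ (2 + 1/c)·E. -/

import Mathlib

open MeasureTheory

/-- In the abstract relative-energy setting with the
distance-weighted length constraint `‖ξ‖ ≤ 1 − c·min{δ², 1}` on `ξ`, one has
`∫ ‖n − ξ‖²·√(2w)‖a‖ dμ + ∫ min{δ², 1}·√(2w)‖a‖ dμ ≤ (2 + 1/c)·E`. -/
theorem stmt4 {Ω : Type*} [MeasurableSpace Ω] (μ : Measure Ω)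
    (d : ℕ) (hd : 1 ≤ d) (ε : ℝ) (hε : 0 < ε)
    (u a ξ : Ω → EuclideanSpace ℝ (Fin d)) (w : Ω → ℝ)
    (hu : AEStronglyMeasurable u μ) (ha : AEStronglyMeasurable a μ)
    (hξ : AEStronglyMeasurable ξ μ) (hw : AEStronglyMeasurable w μ)
    (hw0 : ∀ᵐ x ∂μ, 0 ≤ w x) (hξ1 : ∀ᵐ x ∂μ, ‖ξ x‖ ≤ 1)
    (hu2 : Integrable (fun x => ‖u x‖ ^ 2) μ)
    (ha2 : Integrable (fun x => ‖a x‖ ^ 2) μ)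
    (hwi : Integrable w μ)
    (s : EuclideanSpace ℝ (Fin d)) (hs : ‖s‖ = 1)
    (n : Ω → EuclideanSpace ℝ (Fin d))
    (hn : ∀ x, (a x ≠ 0 → n x = ‖a x‖⁻¹ • a x) ∧ (a x = 0 → n x = s))
    (E : ℝ)
    (hE : E = ∫ x, (1 / 2 * ‖u x‖ ^ 2 + ε / 2 * ‖a x‖ ^ 2 + w x / ε
        - Real.sqrt (2 * w x) * (inner ℝ (ξ x) (a x) : ℝ)) ∂μ)
    (δ : Ω → ℝ) (hδm : Measurable δ) (hδ0 : ∀ x, 0 ≤ δ x)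
    (c : ℝ) (hc : c ∈ Set.Ioo (0 : ℝ) 1)
    (hξc : ∀ᵐ x ∂μ, ‖ξ x‖ ≤ 1 - c * min (δ x ^ 2) 1) :
    ∫ x, ‖n x - ξ x‖ ^ 2 * (Real.sqrt (2 * w x) * ‖a x‖) ∂μ
      + ∫ x, min (δ x ^ 2) 1 * (Real.sqrt (2 * w x) * ‖a x‖) ∂μ
    ≤ (2 + 1 / c) * E := by
  obtain ⟨hc0, hc1⟩ := hc
  have hg0 : ∀ x, 0 ≤ Real.sqrt (2 * w x) * ‖a x‖ := fun x =>
    mul_nonneg (Real.sqrt_nonneg _) (norm_nonneg _)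
  have hsq_meas : AEStronglyMeasurable (fun x => Real.sqrt (2 * w x)) μ :=
    Real.continuous_sqrt.comp_aestronglyMeasurable (hw.const_mul 2)
  have hg_meas : AEStronglyMeasurable (fun x => Real.sqrt (2 * w x) * ‖a x‖) μ :=
    hsq_meas.mul ha.norm
  -- key AM-GM bound
  have hamgm : ∀ᵐ x ∂μ, Real.sqrt (2 * w x) * ‖a x‖ ≤ ε / 2 * ‖a x‖ ^ 2 + w x / ε := by
    filter_upwards [hw0] with x hwx
    have h2w : (0:ℝ) ≤ 2 * w x := by linarith
    have hsq : Real.sqrt (2 * w x) ^ 2 = 2 * w x := Real.sq_sqrt h2w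
    have key : 0 ≤ (ε * ‖a x‖ - Real.sqrt (2 * w x)) ^ 2 := sq_nonneg _
    have hh : 2 * ε * (Real.sqrt (2 * w x) * ‖a x‖)
        ≤ ε ^ 2 * ‖a x‖ ^ 2 + 2 * w x := by nlinarith [key, hsq]
    have h2ε : (0:ℝ) < 2 * ε := by linarith
    calc Real.sqrt (2 * w x) * ‖a x‖
        = 2 * ε * (Real.sqrt (2 * w x) * ‖a x‖) / (2 * ε) := by field_simp
      _ ≤ (ε ^ 2 * ‖a x‖ ^ 2 + 2 * w x) / (2 * ε) := by gcongr
      _ = ε / 2 * ‖a x‖ ^ 2 + w x / ε := by field_simp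
  have hbound_int : Integrable (fun x => ε / 2 * ‖a x‖ ^ 2 + w x / ε) μ :=
    (ha2.const_mul _).add (hwi.div_const ε)
  have hg_int : Integrable (fun x => Real.sqrt (2 * w x) * ‖a x‖) μ := by
    refine hbound_int.mono' hg_meas ?_
    filter_upwards [hamgm] with x hx
    rw [Real.norm_eq_abs, abs_of_nonneg (hg0 x)]
    exact hx
  -- inner product term
  have hI_meas : AEStronglyMeasurable
      (fun x => Real.sqrt (2 * w x) * (inner ℝ (ξ x) (a x) : ℝ)) μ :=
    hsq_meas.mul (hξ.inner ha)
  have hIb : ∀ᵐ x ∂μ, |Real.sqrt (2 * w x) * (inner ℝ (ξ x) (a x) : ℝ)|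
      ≤ Real.sqrt (2 * w x) * ‖a x‖ := by
    filter_upwards [hξ1] with x hx
    have h1 : |(inner ℝ (ξ x) (a x) : ℝ)| ≤ ‖ξ x‖ * ‖a x‖ := abs_real_inner_le_norm _ _
    have h2 : ‖ξ x‖ * ‖a x‖ ≤ 1 * ‖a x‖ :=
      mul_le_mul_of_nonneg_right hx (norm_nonneg _)
    rw [abs_mul, abs_of_nonneg (Real.sqrt_nonneg _)]
    exact mul_le_mul_of_nonneg_left (by linarith) (Real.sqrt_nonneg _)
  have hI_int : Integrable (fun x => Real.sqrt (2 * w x) * (inner ℝ (ξ x) (a x) : ℝ)) μ := by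
    refine hg_int.mono' hI_meas ?_
    filter_upwards [hIb] with x hx
    rwa [Real.norm_eq_abs]
  have hF_int : Integrable
      (fun x => Real.sqrt (2 * w x) * ‖a x‖
        - Real.sqrt (2 * w x) * (inner ℝ (ξ x) (a x) : ℝ)) μ := hg_int.sub hI_int
  -- key pointwise identity for the first integrand
  have hkey : ∀ x, ‖n x - ξ x‖ ^ 2 * (Real.sqrt (2 * w x) * ‖a x‖)
      = (1 + ‖ξ x‖ ^ 2) * (Real.sqrt (2 * w x) * ‖a x‖)
        - 2 * (Real.sqrt (2 * w x) * (inner ℝ (ξ x) (a x) : ℝ)) := by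
    intro x
    rcases eq_or_ne (a x) 0 with h0 | h0
    · simp [h0]
    · have hna : ‖a x‖ ≠ 0 := norm_ne_zero_iff.mpr h0
      have hnx : n x = ‖a x‖⁻¹ • a x := (hn x).1 h0
      have hexp : ‖n x - ξ x‖ ^ 2
          = ‖n x‖ ^ 2 - 2 * (inner ℝ (n x) (ξ x) : ℝ) + ‖ξ x‖ ^ 2 :=
        norm_sub_sq_real _ _
      have hnn : ‖n x‖ = 1 := by
        rw [hnx, norm_smul, norm_inv, norm_norm, inv_mul_cancel₀ hna]
      have hni : (inner ℝ (n x) (ξ x) : ℝ) = ‖a x‖⁻¹ * (inner ℝ (ξ x) (a x) : ℝ) := by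
        rw [hnx, real_inner_smul_left, real_inner_comm]
      rw [hexp, hnn, hni]
      field_simp
      ring
  -- first pointwise inequality
  have hsqle : ∀ᵐ x ∂μ, ‖ξ x‖ ^ 2 ≤ 1 := by
    filter_upwards [hξ1] with x hx
    nlinarith [norm_nonneg (ξ x)]
  have h1 : ∀ᵐ x ∂μ, ‖n x - ξ x‖ ^ 2 * (Real.sqrt (2 * w x) * ‖a x‖)
      ≤ 2 * (Real.sqrt (2 * w x) * ‖a x‖
        - Real.sqrt (2 * w x) * (inner ℝ (ξ x) (a x) : ℝ)) := by
    filter_upwards [hsqle] with x hx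
    rw [hkey x]
    have : (1 + ‖ξ x‖ ^ 2) * (Real.sqrt (2 * w x) * ‖a x‖)
        ≤ 2 * (Real.sqrt (2 * w x) * ‖a x‖) :=
      mul_le_mul_of_nonneg_right (by linarith) (hg0 x)
    linarith
  -- second pointwise inequality
  have h2 : ∀ᵐ x ∂μ, min (δ x ^ 2) 1 * (Real.sqrt (2 * w x) * ‖a x‖)
      ≤ (1 / c) * (Real.sqrt (2 * w x) * ‖a x‖
        - Real.sqrt (2 * w x) * (inner ℝ (ξ x) (a x) : ℝ)) := by
    filter_upwards [hξc] with x hx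
    have hm0 : 0 ≤ min (δ x ^ 2) 1 := le_min (sq_nonneg _) zero_le_one
    have h3 : (inner ℝ (ξ x) (a x) : ℝ) ≤ (1 - c * min (δ x ^ 2) 1) * ‖a x‖ := by
      calc (inner ℝ (ξ x) (a x) : ℝ) ≤ ‖ξ x‖ * ‖a x‖ := real_inner_le_norm _ _
        _ ≤ (1 - c * min (δ x ^ 2) 1) * ‖a x‖ :=
            mul_le_mul_of_nonneg_right hx (norm_nonneg _)
    have h4 : c * min (δ x ^ 2) 1 * ‖a x‖ ≤ ‖a x‖ - (inner ℝ (ξ x) (a x) : ℝ) := by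
      nlinarith
    have h5 : c * (min (δ x ^ 2) 1 * (Real.sqrt (2 * w x) * ‖a x‖))
        ≤ Real.sqrt (2 * w x) * ‖a x‖
          - Real.sqrt (2 * w x) * (inner ℝ (ξ x) (a x) : ℝ) := by
      have := mul_le_mul_of_nonneg_left h4 (Real.sqrt_nonneg (2 * w x))
      nlinarith [this]
    rw [show (1 / c) * (Real.sqrt (2 * w x) * ‖a x‖
        - Real.sqrt (2 * w x) * (inner ℝ (ξ x) (a x) : ℝ))
        = (Real.sqrt (2 * w x) * ‖a x‖
          - Real.sqrt (2 * w x) * (inner ℝ (ξ x) (a x) : ℝ)) / c by ring,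
      le_div_iff₀ hc0]
    nlinarith [h5]
  -- ∫ F ≤ E
  have h3 : (∫ x, (Real.sqrt (2 * w x) * ‖a x‖
      - Real.sqrt (2 * w x) * (inner ℝ (ξ x) (a x) : ℝ)) ∂μ) ≤ E := by
    rw [hE]
    refine integral_mono_ae hF_int ?_ ?_
    · exact (((hu2.const_mul _).add (ha2.const_mul _)).add (hwi.div_const ε)).sub hI_int
    · filter_upwards [hamgm] with x hx
      have : 0 ≤ ‖u x‖ ^ 2 := sq_nonneg _
      linarith
  -- integrability of the two LHS integrands
  have hf1_int : Integrable
      (fun x => ‖n x - ξ x‖ ^ 2 * (Real.sqrt (2 * w x) * ‖a x‖)) μ := by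
    rw [funext hkey]
    refine Integrable.sub ?_ (hI_int.const_mul 2)
    refine (hg_int.const_mul 2).mono'
      ((aestronglyMeasurable_const.add (hξ.norm.pow 2)).mul hg_meas) ?_
    filter_upwards [hsqle] with x hx
    have hnng : 0 ≤ (1 + ‖ξ x‖ ^ 2) * (Real.sqrt (2 * w x) * ‖a x‖) :=
      mul_nonneg (by nlinarith [sq_nonneg ‖ξ x‖]) (hg0 x)
    rw [Real.norm_eq_abs, abs_of_nonneg hnng]
    exact mul_le_mul_of_nonneg_right (by linarith) (hg0 x)
  have hf2_int : Integrable
      (fun x => min (δ x ^ 2) 1 * (Real.sqrt (2 * w x) * ‖a x‖)) μ := by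
    refine hg_int.mono'
      (((hδm.pow_const 2).min measurable_const).aestronglyMeasurable.mul hg_meas) ?_
    refine Filter.Eventually.of_forall fun x => ?_
    have hm0 : 0 ≤ min (δ x ^ 2) 1 := le_min (sq_nonneg _) zero_le_one
    have hm1 : min (δ x ^ 2) 1 ≤ 1 := min_le_right _ _
    rw [Real.norm_eq_abs, abs_of_nonneg (mul_nonneg hm0 (hg0 x))]
    nlinarith [hg0 x]
  -- assemble
  have hi1 : ∫ x, ‖n x - ξ x‖ ^ 2 * (Real.sqrt (2 * w x) * ‖a x‖) ∂μ
      ≤ 2 * ∫ x, (Real.sqrt (2 * w x) * ‖a x‖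
        - Real.sqrt (2 * w x) * (inner ℝ (ξ x) (a x) : ℝ)) ∂μ := by
    rw [← integral_const_mul]
    exact integral_mono_ae hf1_int (hF_int.const_mul 2) h1
  have hi2 : ∫ x, min (δ x ^ 2) 1 * (Real.sqrt (2 * w x) * ‖a x‖) ∂μ
      ≤ (1 / c) * ∫ x, (Real.sqrt (2 * w x) * ‖a x‖
        - Real.sqrt (2 * w x) * (inner ℝ (ξ x) (a x) : ℝ)) ∂μ := by
    rw [← integral_const_mul]
    exact integral_mono_ae hf2_int (hF_int.const_mul _) h2
  have hcinv : 0 < 1 / c := by positivity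
  nlinarith [hi1, hi2, h3, hcinv]
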